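/- The function γ ↦ sin(γ/2)/√(1 - sin(γ)/γ) is strictly decreasing on (0, π), equals 1 at γ = π, and tends to √(3/2) as γ → 0⁺. -/

import Mathlib

open Real Filter Set


lemma sin_lb' {x : ℝ} (hx : 0 < x) : x - x^3/6 < Real.sin x := by
  have key : StrictMonoOn (fun y : ℝ => Real.sin y - (y - y^3/6)) (Set.Ici 0) := by
    apply strictMonoOn_of_deriv_pos (convex_Ici 0)
    · fun_prop
    · intro y hy
      rw [interior_Ici] at hy
      have h1 : HasDerivAt (fun y : ℝ => Real.sin y - (y - y^3/6))
          (Real.cos y - (1 - y^2/2)) y := by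
        have := (Real.hasDerivAt_sin y).sub (((hasDerivAt_id y).sub
          ((hasDerivAt_pow 3 y).div_const 6)))
        exact this.congr_deriv (by simp; ring)
      rw [h1.deriv]
      have := Real.one_sub_sq_div_two_lt_cos (x := y) (ne_of_gt hy)
      linarith
  have := key (Set.self_mem_Ici) (Set.mem_Ici.2 hx.le) hx
  simpa using this

lemma cos_ub_strict {x : ℝ} (hx : 0 < x) : Real.cos x < 1 - x^2/2 + x^4/24 := by
  have key : StrictMonoOn (fun y : ℝ => (1 - y^2/2 + y^4/24) - Real.cos y) (Set.Ici 0) := by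
    apply strictMonoOn_of_deriv_pos (convex_Ici 0)
    · fun_prop
    · intro y hy
      rw [interior_Ici] at hy
      have h1 : HasDerivAt (fun y : ℝ => (1 - y^2/2 + y^4/24) - Real.cos y)
          (Real.sin y - (y - y^3/6)) y := by
        have := (((hasDerivAt_const y (1:ℝ)).sub ((hasDerivAt_pow 2 y).div_const 2)).add
          ((hasDerivAt_pow 4 y).div_const 24)).sub (Real.hasDerivAt_cos y)
        exact this.congr_deriv (by simp; ring)
      rw [h1.deriv]
      linarith [sin_lb' hy]
  have := key (Set.self_mem_Ici) (Set.mem_Ici.2 hx.le) hx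
  simp at this; linarith

lemma sin_ub' {x : ℝ} (hx : 0 ≤ x) : Real.sin x ≤ x - x^3/6 + x^5/120 := by
  rcases eq_or_lt_of_le hx with rfl | hx
  · norm_num
  have key : StrictMonoOn (fun y : ℝ => (y - y^3/6 + y^5/120) - Real.sin y) (Set.Ici 0) := by
    apply strictMonoOn_of_deriv_pos (convex_Ici 0)
    · fun_prop
    · intro y hy
      rw [interior_Ici] at hy
      have h1 : HasDerivAt (fun y : ℝ => (y - y^3/6 + y^5/120) - Real.sin y)
          ((1 - y^2/2 + y^4/24) - Real.cos y) y := by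
        have := (((hasDerivAt_id y).sub ((hasDerivAt_pow 3 y).div_const 6)).add
          ((hasDerivAt_pow 5 y).div_const 120)).sub (Real.hasDerivAt_sin y)
        exact this.congr_deriv (by simp; ring)
      rw [h1.deriv]
      linarith [cos_ub_strict hy]
  have := key (Set.self_mem_Ici) (Set.mem_Ici.2 hx.le) hx
  simp at this; linarith

-- key inequality
set_option maxHeartbeats 1000000 in
lemma key_ineq {x : ℝ} (h1 : 0 < x) (h2 : x < π) :
    x^2 * Real.sin x < (1 - Real.cos x) * (x + Real.sin x) := by
  set u := x / 2 with hu
  have hu0 : 0 < u := by positivity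
  have hu2 : u < π / 2 := by rw [hu]; linarith
  have hu16 : u < 1.6 := by
    have : π < 3.2 := by linarith [Real.pi_lt_d2]
    linarith
  have hs : Real.sin x = 2 * Real.sin u * Real.cos u := by
    rw [hu]; rw [← Real.sin_two_mul]; ring_nf
  have hc : Real.cos x = 1 - 2 * Real.sin u ^ 2 := by
    have h := Real.cos_two_mul u
    have h2 := Real.sin_sq_add_cos_sq u
    have hx2 : x = 2 * u := by rw [hu]; ring
    rw [hx2, h]; nlinarith
  set a := Real.sin u
  set b := Real.cos u
  have ha_lb : u - u^3/6 < a := sin_lb' hu0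
  have ha_ub : a < u := Real.sin_lt hu0
  have hb_ub : b < 1 - u^2/2 + u^4/24 := cos_ub_strict hu0
  have hb_pos : 0 < b := Real.cos_pos_of_mem_Ioo ⟨by linarith, hu2⟩
  have ha_pos : 0 < a := Real.sin_pos_of_pos_of_lt_pi hu0 (by linarith [Real.pi_gt_three])
  have h3 : 0 < u - u^3/6 := by nlinarith
  -- reduce: need 2u²b < a(u + ab), i.e. b(2u² - a²) < ua
  have hmain : b * (2*u^2 - a^2) < u * a := by
    have hA : a^2 > (u - u^3/6)^2 := by nlinarith
    have hB : 2*u^2 - a^2 < u^2 + u^4/3 - u^6/36 := by nlinarith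
    have hpos2 : 0 < u^2 + u^4/3 - u^6/36 := by nlinarith
    have h5 : b * (2*u^2 - a^2) < (1 - u^2/2 + u^4/24) * (u^2 + u^4/3 - u^6/36) := by
      rcases le_or_gt (2*u^2 - a^2) 0 with h | h
      · nlinarith
      · calc b * (2*u^2 - a^2) < b * (u^2 + u^4/3 - u^6/36) :=
              mul_lt_mul_of_pos_left hB hb_pos
          _ ≤ (1 - u^2/2 + u^4/24) * (u^2 + u^4/3 - u^6/36) :=
              mul_le_mul_of_nonneg_right hb_ub.le hpos2.le
    have h6 : u * (u - u^3/6) < u * a := mul_lt_mul_of_pos_left ha_lb hu0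
    have hu2' : u^2 < 2.56 := by nlinarith
    have h8 : u^6 * u^2 ≤ u^6 * 2.56 := by
      apply mul_le_mul_of_nonneg_left hu2'.le (by positivity)
    have h7 : (1 - u^2/2 + u^4/24) * (u^2 + u^4/3 - u^6/36) ≤ u^2 - u^4/6 := by
      nlinarith [pow_nonneg hu0.le 10, pow_nonneg hu0.le 6, h8]
    linarith [h5, h6, h7]
  have hx2 : x = 2 * u := by rw [hu]; ring
  rw [hs, hc, hx2]
  have hfin := mul_lt_mul_of_pos_left hmain (show (0:ℝ) < 4*a by linarith)
  nlinarith [hfin]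

noncomputable def Hf : ℝ → ℝ := fun γ => Real.sin (γ/2)^2 / (1 - Real.sin γ / γ)

lemma g_pos {x : ℝ} (hx : 0 < x) : 0 < 1 - Real.sin x / x :=
  sub_pos.2 ((div_lt_one hx).2 (Real.sin_lt hx))

lemma f_eq_sqrt_H {x : ℝ} (hx : 0 < x) (hx2 : x ≤ π) :
    Real.sin (x/2) / Real.sqrt (1 - Real.sin x / x) = Real.sqrt (Hf x) := by
  have hs : 0 ≤ Real.sin (x/2) :=
    Real.sin_nonneg_of_nonneg_of_le_pi (by linarith) (by linarith [Real.pi_pos])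
  rw [Hf, Real.sqrt_div (by positivity), Real.sqrt_sq hs]

lemma H_hasDeriv {x : ℝ} (hx1 : 0 < x) (hx2 : x < π) :
    ∃ d, HasDerivAt Hf d x ∧ d < 0 := by
  have hg := g_pos hx1
  have hnum : HasDerivAt (fun y : ℝ => Real.sin (y/2)^2)
      (2 * Real.sin (x/2)^1 * (Real.cos (x/2) * (1/2))) x := by
    have h1 : HasDerivAt (fun y : ℝ => Real.sin (y/2)) (Real.cos (x/2) * (1/2)) x := by
      have := (Real.hasDerivAt_sin (x/2)).comp x ((hasDerivAt_id x).div_const 2)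
      exact this
    exact h1.pow 2
  have hden : HasDerivAt (fun y : ℝ => 1 - Real.sin y / y)
      (-((Real.cos x * x - Real.sin x * 1) / x^2)) x := by
    have := (hasDerivAt_const x (1:ℝ)).sub
      ((Real.hasDerivAt_sin x).div (hasDerivAt_id x) hx1.ne')
    exact this.congr_deriv (by simp)
  have hH := hnum.div hden hg.ne'
  refine ⟨_, hH, ?_⟩
  apply div_neg_of_neg_of_pos _ (by positivity)
  -- numerator < 0
  set a := Real.sin (x/2) with ha_def
  set b := Real.cos (x/2) with hb_def
  have ha_pos : 0 < a := Real.sin_pos_of_pos_of_lt_pi (by linarith) (by linarith [Real.pi_pos])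
  have hpy : a^2 + b^2 = 1 := Real.sin_sq_add_cos_sq (x/2)
  have hs : Real.sin x = 2*a*b := by
    rw [ha_def, hb_def, ← Real.sin_two_mul]; ring_nf
  have hc : Real.cos x = 1 - 2*a^2 := by
    have h := Real.cos_two_mul (x/2)
    have hx' : (2:ℝ)*(x/2) = x := by ring
    rw [hx'] at h
    rw [h]; linarith [hpy]
  have hkey := key_ineq hx1 hx2
  rw [hs, hc] at hkey
  have ht : b*x^2 - a*x - 2*a^2*b < 0 := by nlinarith [hkey, ha_pos]
  have heq : 2 * a ^ 1 * (b * (1/2)) * (1 - Real.sin x / x) -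
      a ^ 2 * -((Real.cos x * x - Real.sin x * 1) / x ^ 2)
      = a * (b*x^2 - a*x - 2*a^2*b) / x^2 := by
    rw [hs, hc]; field_simp; linear_combination (-2*a*x) * hpy
  rw [heq]
  exact div_neg_of_neg_of_pos (mul_neg_of_pos_of_neg ha_pos ht) (by positivity)

lemma H_anti : StrictAntiOn Hf (Set.Ioo 0 π) := by
  apply strictAntiOn_of_deriv_neg (convex_Ioo 0 π)
  · apply ContinuousOn.div
    · fun_prop
    · exact continuousOn_const.sub ((Real.continuous_sin.continuousOn).div
        continuousOn_id (fun x hx => ne_of_gt hx.1))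
    · exact fun x hx => (g_pos hx.1).ne'
  · intro x hx
    rw [interior_Ioo] at hx
    obtain ⟨d, hd, hd0⟩ := H_hasDeriv hx.1 hx.2
    rw [hd.deriv]; exact hd0

lemma tendsto_sin_div : Tendsto (fun x : ℝ => Real.sin x / x) (nhdsWithin 0 {(0:ℝ)}ᶜ) (nhds 1) := by
  have h := Real.hasDerivAt_sin 0
  rw [hasDerivAt_iff_tendsto_slope] at h
  rw [Real.cos_zero] at h
  refine h.congr (fun x => ?_)
  simp [slope_def_field, div_eq_div_iff]

lemma tendsto_half : Tendsto (fun γ : ℝ => γ/2) (nhdsWithin 0 (Set.Ioi 0)) (nhdsWithin 0 {(0:ℝ)}ᶜ) := by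
  rw [tendsto_nhdsWithin_iff]
  constructor
  · have : Tendsto (fun γ : ℝ => γ/2) (nhds 0) (nhds 0) := by
      have h := ((continuous_id.div_const (2:ℝ)).tendsto (0:ℝ))
      simp only [id_eq] at h
      norm_num at h
      exact h
    exact this.mono_left nhdsWithin_le_nhds
  · filter_upwards [self_mem_nhdsWithin] with γ (hγ : 0 < γ)
    simp [Set.mem_compl_iff]; positivity

lemma tendsto_num : Tendsto (fun γ : ℝ => Real.sin (γ/2)^2 / γ^2)
    (nhdsWithin 0 (Set.Ioi 0)) (nhds (1/4)) := by
  have h2 : Tendsto (fun γ : ℝ => Real.sin (γ/2) / (γ/2)) (nhdsWithin 0 (Set.Ioi 0)) (nhds 1) :=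
    tendsto_sin_div.comp tendsto_half
  have h3 := (h2.mul h2).mul tendsto_const_nhds (b := (1/4 : ℝ))
  norm_num at h3
  refine h3.congr' ?_
  filter_upwards [self_mem_nhdsWithin] with γ (hγ : 0 < γ)
  field_simp
  ring

lemma tendsto_den : Tendsto (fun γ : ℝ => (1 - Real.sin γ / γ) / γ^2)
    (nhdsWithin 0 (Set.Ioi 0)) (nhds (1/6)) := by
  apply tendsto_of_tendsto_of_tendsto_of_le_of_le'
    (g := fun γ : ℝ => 1/6 - γ^2/120) (h := fun _ : ℝ => 1/6)
  · have : Tendsto (fun γ : ℝ => 1/6 - γ^2/120) (nhds (0:ℝ)) (nhds (1/6 - 0^2/120)) :=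
      (continuous_const.sub ((continuous_pow 2).div_const 120)).tendsto (0:ℝ)
    norm_num at this
    exact this.mono_left nhdsWithin_le_nhds
  · exact tendsto_const_nhds
  · filter_upwards [self_mem_nhdsWithin] with γ (hγ : 0 < γ)
    have h := sin_ub' hγ.le
    have hb : γ^2/6 - γ^4/120 ≤ 1 - Real.sin γ / γ := by
      have : Real.sin γ / γ ≤ 1 - γ^2/6 + γ^4/120 := by
        rw [div_le_iff₀ hγ]; nlinarith
      linarith
    calc 1/6 - γ^2/120 = (γ^2/6 - γ^4/120)/γ^2 := by field_simp
      _ ≤ (1 - Real.sin γ / γ)/γ^2 := by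
          apply div_le_div_of_nonneg_right hb ?_ <;> positivity
  · filter_upwards [self_mem_nhdsWithin] with γ (hγ : 0 < γ)
    have h := sin_lb' hγ
    have hb : 1 - Real.sin γ / γ ≤ γ^2/6 := by
      have : (1 - γ^2/6) ≤ Real.sin γ / γ := by
        rw [le_div_iff₀ hγ]; nlinarith
      linarith
    calc (1 - Real.sin γ / γ)/γ^2 ≤ (γ^2/6)/γ^2 := by
          apply div_le_div_of_nonneg_right hb ?_ <;> positivity
      _ = 1/6 := by field_simp

lemma tendsto_H : Tendsto Hf (nhdsWithin 0 (Set.Ioi 0)) (nhds (3/2)) := by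
  have h := tendsto_num.div tendsto_den (by norm_num)
  norm_num at h
  refine h.congr' ?_
  filter_upwards [self_mem_nhdsWithin] with γ (hγ : 0 < γ)
  show Real.sin (γ / 2) ^ 2 / γ ^ 2 / ((1 - Real.sin γ / γ) / γ ^ 2) = Hf γ
  rw [Hf]
  rw [div_div_div_cancel_right₀ (by positivity : (γ:ℝ)^2 ≠ 0)]

theorem stmt_19 :
    StrictAntiOn (fun γ : ℝ => Real.sin (γ/2) / Real.sqrt (1 - Real.sin γ / γ))
      (Set.Ioo 0 π) ∧
    Real.sin (π/2) / Real.sqrt (1 - Real.sin π / π) = 1 ∧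
    Tendsto (fun γ : ℝ => Real.sin (γ/2) / Real.sqrt (1 - Real.sin γ / γ))
      (nhdsWithin 0 (Set.Ioi 0)) (nhds (Real.sqrt (3/2))) := by
  refine ⟨?_, ?_, ?_⟩
  · intro a ha b hb hab
    simp only
    rw [f_eq_sqrt_H ha.1 ha.2.le, f_eq_sqrt_H hb.1 hb.2.le]
    apply Real.sqrt_lt_sqrt
    · apply div_nonneg (sq_nonneg _) (g_pos hb.1).le
    · exact H_anti ha hb hab
  · rw [Real.sin_pi, Real.sin_pi_div_two]
    norm_num
  · have h := (Real.continuous_sqrt.tendsto (3/2)).comp tendsto_H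
    refine h.congr' ?_
    filter_upwards [self_mem_nhdsWithin, Ioo_mem_nhdsGT Real.pi_pos]
      with γ (hγ : 0 < γ) hγπ
    exact (f_eq_sqrt_H hγ hγπ.2.le).symm
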